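/- Let T₁ = {000, 110, 011, 101}, T₂ = {000, 100}, T₃ = {000, 010}, T₄ = {000, 001}, T₅ = {000, 111} be the indicated subsets of (ZMod 2)³, and let C = {(c₁, …, c₅) : cᵢ ∈ Tᵢ for all i, and c₁ + c₂ + c₃ + c₄ + c₅ = 0 in (ZMod 2)³}. Then C is a 1-perfect code in the mixed alphabet space X = T₁ × T₂ × T₃ × T₄ × T₅: for every x ∈ X there exists a unique c ∈ C such that x and c differ in at most one of the five coordinates. -/
import Mathlib


/-- The ambient alphabet `(ZMod 2)³`. -/
abbrev V : Type := ZMod 2 × ZMod 2 × ZMod 2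

/-- The five subgroups `T₁,…,T₅` of `(ZMod 2)³` whose nonzero parts partition
the nonzero elements. -/
def T : Fin 5 → Finset V :=
  ![{(0,0,0), (1,1,0), (0,1,1), (1,0,1)},
    {(0,0,0), (1,0,0)},
    {(0,0,0), (0,1,0)},
    {(0,0,0), (0,0,1)},
    {(0,0,0), (1,1,1)}]

/-- The code `C = {(c₁,…,c₅) : cᵢ ∈ Tᵢ, c₁+⋯+c₅ = 0}`. -/
def C : Finset (Fin 5 → V) :=
  Finset.univ.filter (fun c => (∀ i, c i ∈ T i) ∧ ∑ i, c i = 0)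

lemma TT_add : ∀ i : Fin 5, ∀ a b : V, ¬(a ∈ T i ∧ b ∈ T i) ∨ a + b ∈ T i := by decide

lemma TT_add' (i : Fin 5) (a b : V) (ha : a ∈ T i) (hb : b ∈ T i) : a + b ∈ T i :=
  (TT_add i a b).resolve_left (fun h => h ⟨ha, hb⟩)

lemma TT_part : ∀ v : V, v ≠ 0 → ∃ i, v ∈ T i ∧ ∀ j, v ∈ T j → j = i := by decide

lemma vv : ∀ v : V, v + v = 0 := by decide

lemma myAddEqZero : ∀ a b : V, a + b = 0 → a = b := by decide

lemma myAddEqIff : ∀ a b s : V, a + b = s → a = b + s := by decide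

lemma myCancel : ∀ a b : V, a + b = b → a = 0 := by decide

lemma ne_self_add : ∀ a s : V, s ≠ 0 → a ≠ a + s := by decide

/-- If two vectors agree except possibly at `j`, their sums differ by `c j + x j`. -/
lemma sum_diff (x c : Fin 5 → V) (j : Fin 5) (h : ∀ k, k ≠ j → x k = c k) :
    ∑ i, c i + ∑ i, x i = c j + x j := by
  rw [← Finset.sum_add_distrib]
  exact Finset.sum_eq_single j
    (fun k _ hk => by rw [← h k hk, vv])
    (fun h => absurd (Finset.mem_univ j) h)

/-- From Hamming distance ≤ 1: either equal everywhere, or exactly one coordinate differs. -/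
lemma diff_cases (x c : Fin 5 → V)
    (h : (Finset.univ.filter (fun i => x i ≠ c i)).card ≤ 1) :
    (∀ i, x i = c i) ∨ ∃ j, x j ≠ c j ∧ ∀ k, k ≠ j → x k = c k := by
  by_cases he : ∀ i, x i = c i
  · exact Or.inl he
  · push_neg at he
    obtain ⟨j, hj⟩ := he
    refine Or.inr ⟨j, hj, fun k hk => ?_⟩
    by_contra hxk
    exact hk (Finset.card_le_one.mp h k (by simp [hxk]) j (by simp [hj]))

/-- `C` is a 1-perfect code in the mixed alphabet space `X = T₁ × ⋯ × T₅`: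
every `x ∈ X` is within Hamming distance 1 of a unique codeword. -/
theorem stmt13 :
    ∀ x : Fin 5 → V, (∀ i, x i ∈ T i) →
      ∃! c : Fin 5 → V, c ∈ C ∧
        (Finset.univ.filter (fun i => x i ≠ c i)).card ≤ 1 := by
  intro x hx
  by_cases h0 : ∑ i, x i = 0
  · refine ⟨x, ⟨?_, ?_⟩, ?_⟩
    · simp [C, hx, h0]
    · simp
    · rintro c ⟨hc, hcard⟩
      simp only [C, Finset.mem_filter] at hc
      obtain ⟨-, -, hcsum⟩ := hc
      rcases diff_cases x c hcard with he | ⟨j, hj, hk⟩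
      · exact funext fun i => (he i).symm
      · exfalso
        have := sum_diff x c j hk
        rw [hcsum, h0, add_zero] at this
        exact hj (myAddEqZero _ _ this.symm).symm
  · obtain ⟨i0, hi0, hiu⟩ := TT_part _ h0
    set s : V := ∑ i, x i with hs
    refine ⟨Function.update x i0 (x i0 + s), ⟨?_, ?_⟩, ?_⟩
    · simp only [C, Finset.mem_filter, Finset.mem_univ, true_and]
      constructor
      · intro i
        by_cases hi : i = i0
        · subst hi; rw [Function.update_self]; exact TT_add' _ _ _ (hx i) hi0
        · rw [Function.update_of_ne hi]; exact hx i
      · have := sum_diff x (Function.update x i0 (x i0 + s)) i0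
          (fun k hk => (Function.update_of_ne hk _ _).symm)
        rw [Function.update_self, ← hs] at this
        have h2 : (x i0 + s) + x i0 = s := by
          rw [add_comm (x i0) s, add_assoc, vv, add_zero]
        rw [h2] at this
        exact myCancel _ _ this
    · have hsub : (Finset.univ.filter (fun i => x i ≠ Function.update x i0 (x i0 + s) i))
          ⊆ {i0} := by
        intro k hk
        simp only [Finset.mem_filter] at hk
        by_contra hki
        simp only [Finset.mem_singleton] at hki
        exact hk.2 (Function.update_of_ne hki _ _).symm
      calc _ ≤ ({i0} : Finset (Fin 5)).card := Finset.card_le_card hsub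
        _ = 1 := Finset.card_singleton i0
    · rintro c ⟨hc, hcard⟩
      simp only [C, Finset.mem_filter, Finset.mem_univ, true_and] at hc
      obtain ⟨hcT, hcsum⟩ := hc
      rcases diff_cases x c hcard with he | ⟨j, hj, hk⟩
      · exfalso
        apply h0
        rw [hs, show x = c from funext he]
        exact hcsum
      · have hsum := sum_diff x c j hk
        rw [hcsum, zero_add, ← hs] at hsum
        have hjT : s ∈ T j := hsum ▸ TT_add' j _ _ (hcT j) (hx j)
        have hji : j = i0 := hiu j hjT
        subst hji
        have hcj : c j = x j + s := myAddEqIff _ _ _ hsum.symm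
        funext k
        by_cases hkj : k = j
        · subst hkj; rw [Function.update_self, hcj]
        · rw [Function.update_of_ne hkj, ← hk k hkj]
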